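/- For n > 0 and positive integers β, γ, and any rational α: γ/(βn+γ) * C(βn+γ, n) = ∑_{k=0}^n (-1)^n * [((1-β)k - α)/((1-β)n - α)] * C((1-β)n - α, n-k) * C(α-γ, k), where C(x,m) is the generalized binomial coefficient, provided (1-β)n - α ≠ 0. -/

import Mathlib

open Finset Polynomial

private lemma descQ (r : ℚ) (m : ℕ) :
    (descPochhammer ℤ m).smeval r = (m.factorial : ℚ) * Ring.choose r m := by
  rw [Ring.descPochhammer_eq_factorial_smul_choose, nsmul_eq_mul]

private lemma aux1 (r : ℚ) (m : ℕ) :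
    ((m : ℚ) + 1) * Ring.choose r (m + 1) = r * Ring.choose (r - 1) m := by
  have h1 := descQ r (m + 1)
  have h2 := descQ (r - 1) m
  have h3 : (descPochhammer ℤ (m + 1)).smeval r
      = r * (descPochhammer ℤ m).smeval (r - 1) := by
    rw [descPochhammer_succ_left]
    simp [Polynomial.smeval_mul, Polynomial.smeval_comp, Polynomial.smeval_sub,
      Polynomial.smeval_X, Polynomial.smeval_one]
  rw [h1, h2] at h3
  have hf : (m.factorial : ℚ) ≠ 0 := by exact_mod_cast m.factorial_ne_zero
  have : ((m + 1).factorial : ℚ) = ((m : ℚ) + 1) * m.factorial := by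
    push_cast [Nat.factorial_succ]; ring
  rw [this] at h3
  have hf' : (m.factorial : ℚ) * (((m : ℚ) + 1) * Ring.choose r (m + 1))
      = (m.factorial : ℚ) * (r * Ring.choose (r - 1) m) := by
    linear_combination h3
  exact mul_left_cancel₀ hf hf'

private lemma aux2 (w : ℚ) (nn : ℕ) :
    Ring.multichoose (-w) nn = (-1 : ℚ) ^ nn * Ring.choose w nn := by
  have h1 := Ring.factorial_nsmul_multichoose_eq_ascPochhammer (-w) nn
  rw [Polynomial.ascPochhammer_smeval_neg_eq_descPochhammer, descQ] at h1
  have hf : (nn.factorial : ℚ) ≠ 0 := by exact_mod_cast nn.factorial_ne_zero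
  rw [nsmul_eq_mul, Units.smul_def, zsmul_eq_mul, Int.cast_negOnePow_natCast] at h1
  have hf' : (nn.factorial : ℚ) * Ring.multichoose (-w) nn
      = (nn.factorial : ℚ) * ((-1 : ℚ) ^ nn * Ring.choose w nn) := by
    linear_combination h1
  exact mul_left_cancel₀ hf hf'

private lemma aux3 (z nn : ℕ) :
    Ring.choose (-(z : ℚ) - 1) nn = (-1 : ℚ) ^ nn * ((z + nn).choose nn : ℚ) := by
  have : Ring.choose (-(z : ℚ) - 1) nn = Ring.multichoose (-(((z + nn : ℕ)) : ℚ)) nn := by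
    rw [Ring.choose]
    congr 1
    push_cast
    ring
  rw [this, aux2, Ring.choose_natCast]

private lemma vander (r s : ℚ) (nn : ℕ) :
    ∑ k ∈ range (nn + 1), Ring.choose r k * Ring.choose s (nn - k)
      = Ring.choose (r + s) nn := by
  rw [Ring.add_choose_eq nn (Commute.all r s),
    Finset.Nat.sum_antidiagonal_eq_sum_range_succ_mk]

private lemma final (β γ m : ℕ) (hβ : 0 < β) (hγ : 0 < γ) :
    (γ : ℚ) / ((β : ℚ) * ((m : ℚ) + 1) + γ) * ((β * (m + 1) + γ).choose (m + 1) : ℚ)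
      = (((β * (m + 1) + γ - 1).choose (m + 1) : ℕ) : ℚ)
        + (1 - (β : ℚ)) * (((β * (m + 1) + γ - 1).choose m : ℕ) : ℚ) := by
  set K : ℕ := β * (m + 1) + γ - 1 with hK
  have hM : β * (m + 1) + γ = K + 1 := by omega
  have hP : ((K + 1).choose (m + 1) : ℚ) = (K.choose m : ℚ) + (K.choose (m + 1) : ℚ) := by
    exact_mod_cast congrArg (Nat.cast (R := ℚ)) (Nat.choose_succ_succ K m)
  have hA : ((K : ℚ) + 1) * (K.choose m : ℚ) = ((K + 1).choose (m + 1) : ℚ) * ((m : ℚ) + 1) := by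
    exact_mod_cast congrArg (Nat.cast (R := ℚ)) (Nat.add_one_mul_choose_eq K m)
  have hKq : (K : ℚ) + 1 = (β : ℚ) * ((m : ℚ) + 1) + γ := by
    have h' : ((K + 1 : ℕ) : ℚ) = ((β * (m + 1) + γ : ℕ) : ℚ) := by rw [hM]
    push_cast at h'
    linarith
  have hM0 : (β : ℚ) * ((m : ℚ) + 1) + γ ≠ 0 := by positivity
  rw [hM]
  field_simp
  linear_combination ((β : ℚ) * ((m : ℚ) + 1) + γ) * hP + (β : ℚ) * hA
    + (-(β : ℚ) * (K.choose m : ℚ)) * hKq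

theorem stmt_6 (n β γ : ℕ) (hn : 0 < n) (hβ : 0 < β) (hγ : 0 < γ) (α : ℚ)
    (h : ((1 : ℚ) - β) * n - α ≠ 0) :
    ((γ : ℚ) / (β * n + γ)) * ((β * n + γ).choose n)
      = ∑ k ∈ Finset.range (n + 1),
          (-1 : ℚ) ^ n * ((((1 : ℚ) - β) * k - α) / (((1 : ℚ) - β) * n - α)) *
            Ring.choose (((1 : ℚ) - β) * n - α) (n - k) * Ring.choose (α - γ) k := by
  obtain ⟨m, rfl⟩ : ∃ m, n = m + 1 := ⟨n - 1, (Nat.succ_pred_eq_of_pos hn).symm⟩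
  obtain ⟨b, hb⟩ : ∃ b, β = b + 1 := ⟨β - 1, by omega⟩
  obtain ⟨g, hg⟩ : ∃ g, γ = g + 1 := ⟨γ - 1, by omega⟩
  set x : ℚ := (1 - (β : ℚ)) * ((m + 1 : ℕ) : ℚ) - α with hxdef
  have hterm : ∀ k ∈ Finset.range (m + 1 + 1),
      (-1 : ℚ) ^ (m + 1) * ((((1 : ℚ) - β) * k - α) / x) *
          Ring.choose x (m + 1 - k) * Ring.choose (α - γ) k
        = (-1 : ℚ) ^ (m + 1) * (Ring.choose (α - γ) k * Ring.choose x (m + 1 - k))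
          - (-1 : ℚ) ^ (m + 1) * (1 - (β : ℚ)) *
            (if k < m + 1 then Ring.choose (α - γ) k * Ring.choose (x - 1) (m - k) else 0) := by
    intro k hk
    rw [Finset.mem_range] at hk
    by_cases hkm : k < m + 1
    · rw [if_pos hkm, show m + 1 - k = (m - k) + 1 from by omega]
      have hc := aux1 x (m - k)
      have hcast : ((m - k : ℕ) : ℚ) = (m : ℚ) - k := by
        push_cast [Nat.cast_sub (by omega : k ≤ m)]
        ring
      rw [hcast] at hc
      rw [hxdef] at hc ⊢
      push_cast at hc ⊢
      have hx' : (1 - (β : ℚ)) * ((m : ℚ) + 1) - α ≠ 0 := by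
        rw [hxdef] at h; push_cast at h; exact h
      field_simp
      linear_combination (-(1 - (β : ℚ)) * Ring.choose (α - γ) k) * hc
    · have hkeq : k = m + 1 := by omega
      subst hkeq
      rw [if_neg hkm, Nat.sub_self, Ring.choose_zero_right, div_self h]
      ring
  rw [Finset.sum_congr rfl hterm, Finset.sum_sub_distrib, ← Finset.mul_sum, ← Finset.mul_sum]
  have hs1 : ∑ k ∈ Finset.range (m + 1 + 1),
      Ring.choose (α - γ) k * Ring.choose x (m + 1 - k) = Ring.choose (α - γ + x) (m + 1) :=
    vander (α - γ) x (m + 1)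
  have hs2 : ∑ k ∈ Finset.range (m + 1 + 1),
      (if k < m + 1 then Ring.choose (α - γ) k * Ring.choose (x - 1) (m - k) else 0)
        = Ring.choose (α - γ + (x - 1)) m := by
    rw [Finset.sum_range_succ, if_neg (lt_irrefl (m + 1)), add_zero,
      Finset.sum_congr rfl (fun k hk => if_pos (Finset.mem_range.mp hk))]
    exact vander (α - γ) (x - 1) m
  rw [hs1, hs2]
  set W : ℕ := b * (m + 1) + g with hW
  have hz1 : α - γ + x = -(W : ℚ) - 1 := by
    have hWc : (W : ℚ) = ((β : ℚ) - 1) * ((m : ℚ) + 1) + ((γ : ℚ) - 1) := by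
      push_cast [hW, hb, hg]; ring
    rw [hxdef, hWc]; push_cast; ring
  have hz2 : α - γ + (x - 1) = -((W + 1 : ℕ) : ℚ) - 1 := by
    rw [show α - γ + (x - 1) = (α - γ + x) - 1 from by ring, hz1]; push_cast; ring
  rw [hz1, hz2, aux3, aux3]
  have he1 : (-1 : ℚ) ^ (m + 1) * ((-1 : ℚ) ^ (m + 1)) = 1 := by
    rw [← pow_add, show m + 1 + (m + 1) = 2 * (m + 1) from by ring, pow_mul]
    norm_num
  have he2 : (-1 : ℚ) ^ (m + 1) * ((-1 : ℚ) ^ m) = -1 := by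
    rw [pow_succ, mul_comm ((-1:ℚ)^m), mul_assoc, ← pow_add,
      show m + m = 2 * m from by ring, pow_mul]
    norm_num
  have hch1 : W + (m + 1) = β * (m + 1) + γ - 1 := by rw [hb, hg, Nat.add_mul]; omega
  have hch2 : W + 1 + m = β * (m + 1) + γ - 1 := by rw [hb, hg, Nat.add_mul]; omega
  rw [hch1, hch2]
  have hfin := final β γ m hβ hγ
  have hp1 : (-1 : ℚ) ^ (m * 2) = 1 := by
    rw [mul_comm, pow_mul]; norm_num
  push_cast at hfin ⊢
  linear_combination hfin - ((((β * (m + 1) + γ - 1).choose (m + 1) : ℚ))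
    + (1 - (β : ℚ)) * (((β * (m + 1) + γ - 1).choose m : ℚ))) * hp1
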